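/- The polynomial P₁(x,y,z) = (xyz − z + y + x)² ∈ ℝ[x,y,z] is extremal in σ_P(2,2,2): whenever P₁ = g + h with g, h ∈ σ_P(2,2,2), there exists a real constant c ≥ 0 with g = c·P₁. -/

import Mathlib

open MvPolynomial

noncomputable section

/-- `σ_P(2,2,2)`: real polynomials in `x,y,z` of degree at most `2` in each variable that are
nonnegative on all of `ℝ³`. -/
def sigmaP222 : Set (MvPolynomial (Fin 3) ℝ) :=
  { p | p.degreeOf 0 ≤ 2 ∧ p.degreeOf 1 ≤ 2 ∧ p.degreeOf 2 ≤ 2 ∧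
        ∀ x : Fin 3 → ℝ, 0 ≤ eval x p }

/-- If a real quadratic is everywhere nonnegative, its leading coefficient is nonnegative. -/
lemma quadL1 {α β γ : ℝ} (h : ∀ t : ℝ, 0 ≤ α*t^2 + β*t + γ) : 0 ≤ α := by
  by_contra hc
  push_neg at hc
  have hαne : α ≠ 0 := ne_of_lt hc
  have hγ : 0 ≤ γ := by have := h 0; nlinarith [this]
  have hsum : ∀ t : ℝ, 0 ≤ α*t^2 + γ := by
    intro t
    have h1 := h t; have h2 := h (-t)
    nlinarith
  have hx : (0:ℝ) ≤ γ/(-α) + 1 := by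
    have : (0:ℝ) ≤ γ/(-α) := div_nonneg hγ (by linarith)
    linarith
  have ht := hsum (Real.sqrt (γ/(-α) + 1))
  rw [Real.sq_sqrt hx] at ht
  have he : α * (γ/(-α) + 1) + γ = α := by field_simp [hαne]; ring
  linarith [he ▸ ht]

/-- An everywhere-nonnegative linear function has zero slope. -/
lemma quadL3 {β γ : ℝ} (h : ∀ t : ℝ, 0 ≤ β*t + γ) : β = 0 := by
  by_contra hb
  have ht := h ((-γ-1)/β)
  rw [mul_div_cancel₀ _ hb] at ht
  linarith

/-- A nonnegative real quadratic vanishing at `t₀` is `α (t - t₀)²`. -/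
lemma quadL2 {α β γ t₀ : ℝ} (h : ∀ t : ℝ, 0 ≤ α*t^2 + β*t + γ)
    (h0 : α*t₀^2 + β*t₀ + γ = 0) : β = -(2*α*t₀) ∧ γ = α*t₀^2 := by
  have hα := quadL1 h
  have h1 : (0:ℝ) < α + 1 := by linarith
  obtain ⟨δ, hδdef⟩ : ∃ δ : ℝ, δ = 2*α*t₀ + β := ⟨_, rfl⟩
  obtain ⟨s, hsdef⟩ : ∃ s : ℝ, s = -δ/(α+1) := ⟨_, rfl⟩
  have key : α*(t₀+s)^2 + β*(t₀+s) + γ = α*s^2 + δ*s := by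
    rw [hδdef]; linear_combination h0
  have hval : α*s^2 + δ*s = -(δ^2/(α+1)^2) := by
    rw [hsdef]; field_simp; ring
  have ht := h (t₀ + s)
  rw [key, hval] at ht
  have h2 : δ^2/(α+1)^2 ≤ 0 := by linarith
  have h3 : 0 ≤ δ^2/(α+1)^2 := div_nonneg (sq_nonneg _) (sq_nonneg _)
  have h4 : δ^2/(α+1)^2 = 0 := le_antisymm h2 h3
  have h5 : δ = 0 := by
    rw [div_eq_zero_iff] at h4
    rcases h4 with h4 | h4
    · exact pow_eq_zero_iff (n := 2) (by norm_num) |>.1 h4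
    · exact absurd h4 (by positivity)
  have hβ : β = -(2*α*t₀) := by rw [hδdef] at h5; linarith
  exact ⟨hβ, by linear_combination h0 - t₀ * hβ⟩

/-- Coefficient matching for quadratics that agree as functions. -/
lemma quadL4 {α β γ α' β' γ' : ℝ} (h : ∀ t : ℝ, α*t^2 + β*t + γ = α'*t^2 + β'*t + γ') :
    α = α' ∧ β = β' ∧ γ = γ' := by
  have h0 := h 0; have h1 := h 1; have h2 := h (-1)
  refine ⟨by nlinarith, by nlinarith, by nlinarith⟩

/-- A multivariate polynomial of degree at most `2` in the first variable evaluates as a quadratic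
in that variable, with coefficients the evaluations of its `finSuccEquiv` coefficients. -/
lemma eval_decomp {n : ℕ} (p : MvPolynomial (Fin (n+1)) ℝ) (hp : p.degreeOf 0 ≤ 2)
    (t : ℝ) (s : Fin n → ℝ) :
    eval (Fin.cons t s : Fin (n+1) → ℝ) p =
      eval s ((finSuccEquiv ℝ n p).coeff 2) * t^2 +
      eval s ((finSuccEquiv ℝ n p).coeff 1) * t +
      eval s ((finSuccEquiv ℝ n p).coeff 0) := by
  rw [eval_eq_eval_mv_eval']
  have hd : (Polynomial.map (eval s) (finSuccEquiv ℝ n p)).natDegree < 3 := by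
    have h1 := Polynomial.natDegree_map_le (f := eval s) (p := finSuccEquiv ℝ n p)
    rw [natDegree_finSuccEquiv] at h1
    omega
  rw [Polynomial.eval_eq_sum_range' hd]
  simp [Finset.sum_range_succ, Polynomial.coeff_map]
  ring

set_option maxHeartbeats 1000000 in
/-- Proposition 6 (part): `P₁(x,y,z) = (xyz − z + y + x)²` is extremal in `σ_P(2,2,2)`. -/
theorem P1_extremal_in_sigmaP (P₁ : MvPolynomial (Fin 3) ℝ)
    (hP₁ : P₁ = (X 0 * X 1 * X 2 - X 2 + X 1 + X 0) ^ 2) :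
    ∀ g h : MvPolynomial (Fin 3) ℝ, g ∈ sigmaP222 → h ∈ sigmaP222 → P₁ = g + h →
      ∃ c : ℝ, 0 ≤ c ∧ g = C c * P₁ := by
  intro g h hg hh hsum
  obtain ⟨hg0, hg1, hg2, hgnn⟩ := hg
  obtain ⟨hh0, hh1, hh2, hhnn⟩ := hh
  -- Layer 1: write g and h as quadratics in the first variable x.
  obtain ⟨A, hA_def⟩ : ∃ A : MvPolynomial (Fin 2) ℝ, A = (finSuccEquiv ℝ 2 g).coeff 2 := ⟨_, rfl⟩
  obtain ⟨Bg, hB_def⟩ : ∃ Bg : MvPolynomial (Fin 2) ℝ, Bg = (finSuccEquiv ℝ 2 g).coeff 1 := ⟨_, rfl⟩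
  obtain ⟨Cg, hC_def⟩ : ∃ Cg : MvPolynomial (Fin 2) ℝ, Cg = (finSuccEquiv ℝ 2 g).coeff 0 := ⟨_, rfl⟩
  obtain ⟨A', hA'_def⟩ : ∃ A' : MvPolynomial (Fin 2) ℝ, A' = (finSuccEquiv ℝ 2 h).coeff 2 := ⟨_, rfl⟩
  obtain ⟨B', hB'_def⟩ : ∃ B' : MvPolynomial (Fin 2) ℝ, B' = (finSuccEquiv ℝ 2 h).coeff 1 := ⟨_, rfl⟩
  obtain ⟨C', hC'_def⟩ : ∃ C' : MvPolynomial (Fin 2) ℝ, C' = (finSuccEquiv ℝ 2 h).coeff 0 := ⟨_, rfl⟩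
  have hgq : ∀ (t : ℝ) (s : Fin 2 → ℝ),
      eval (Fin.cons t s : Fin 3 → ℝ) g =
        eval s A * t^2 + eval s Bg * t + eval s Cg := fun t s => by
    rw [hA_def, hB_def, hC_def]; exact eval_decomp g hg0 t s
  have hhq : ∀ (t : ℝ) (s : Fin 2 → ℝ),
      eval (Fin.cons t s : Fin 3 → ℝ) h =
        eval s A' * t^2 + eval s B' * t + eval s C' := fun t s => by
    rw [hA'_def, hB'_def, hC'_def]; exact eval_decomp h hh0 t s
  have hgnn' : ∀ (t : ℝ) (s : Fin 2 → ℝ),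
      0 ≤ eval s A * t^2 + eval s Bg * t + eval s Cg := fun t s =>
    (hgq t s) ▸ hgnn (Fin.cons t s)
  have hhnn' : ∀ (t : ℝ) (s : Fin 2 → ℝ),
      0 ≤ eval s A' * t^2 + eval s B' * t + eval s C' := fun t s =>
    (hhq t s) ▸ hhnn (Fin.cons t s)
  have hq_eval : ∀ (t : ℝ) (s : Fin 2 → ℝ),
      eval (Fin.cons t s : Fin 3 → ℝ) P₁ =
        ((s 0)*(s 1)+1)^2 * t^2 + (2*((s 0)*(s 1)+1)*((s 0) - (s 1))) * t
          + ((s 0)-(s 1))^2 := by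
    intro t s
    rw [hP₁]
    simp [show (Fin.cons t s : Fin 3 → ℝ) 1 = s 0 from rfl,
          show (Fin.cons t s : Fin 3 → ℝ) 2 = s 1 from rfl,
          show (Fin.cons t s : Fin 3 → ℝ) 0 = t from rfl]
    ring
  have hcoeffs : ∀ s : Fin 2 → ℝ,
      (eval s A + eval s A' = ((s 0)*(s 1)+1)^2) ∧
      (eval s Bg + eval s B' = 2*((s 0)*(s 1)+1)*((s 0)-(s 1))) ∧
      (eval s Cg + eval s C' = ((s 0)-(s 1))^2) := by
    intro s
    refine quadL4 (fun t => ?_)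
    have h4 := congrArg (eval (Fin.cons t s : Fin 3 → ℝ)) hsum
    rw [map_add, hgq t s, hhq t s, hq_eval t s] at h4
    linarith
  have hApos : ∀ s : Fin 2 → ℝ, 0 ≤ eval s A := fun s => quadL1 (fun t => hgnn' t s)
  have hA'pos : ∀ s : Fin 2 → ℝ, 0 ≤ eval s A' := fun s => quadL1 (fun t => hhnn' t s)
  have hAle : ∀ s : Fin 2 → ℝ, eval s A ≤ ((s 0)*(s 1)+1)^2 := fun s => by
    have := (hcoeffs s).1; linarith [hA'pos s]
  -- the key pointwise identities for B and C in terms of A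
  have E12 : ∀ s : Fin 2 → ℝ,
      eval s Bg * ((s 0)*(s 1)+1) = -2 * eval s A * ((s 1) - (s 0)) ∧
      eval s Cg * ((s 0)*(s 1)+1)^2 = eval s A * ((s 1)-(s 0))^2 := by
    intro s
    by_cases hc : (s 0)*(s 1)+1 = 0
    · have hA0 : eval s A = 0 := by
        have h1 := hAle s; rw [hc] at h1
        have h2 := hApos s
        nlinarith
      have hB0 : eval s Bg = 0 := by
        refine quadL3 (γ := eval s Cg) (fun t => ?_)
        have := hgnn' t s
        rw [hA0] at this
        nlinarith [this]
      rw [hc, hA0, hB0]; constructor <;> ring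
    · obtain ⟨t₀, ht₀⟩ : ∃ t₀ : ℝ, t₀ = ((s 1) - (s 0))/((s 0)*(s 1)+1) := ⟨_, rfl⟩
      have hq0 : eval (Fin.cons t₀ s : Fin 3 → ℝ) P₁ = 0 := by
        rw [hq_eval t₀ s, ht₀]
        field_simp
        ring
      have hg_eq0 : eval (Fin.cons t₀ s : Fin 3 → ℝ) g = 0 := by
        have h4 := congrArg (eval (Fin.cons t₀ s : Fin 3 → ℝ)) hsum
        rw [map_add] at h4
        have h5 := hhnn (Fin.cons t₀ s)
        have h6 := hgnn (Fin.cons t₀ s)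
        rw [hq0] at h4
        linarith
      have hroot : eval s A * t₀^2 + eval s Bg * t₀ + eval s Cg = 0 := by
        rw [← hgq t₀ s]; exact hg_eq0
      obtain ⟨hB, hC⟩ := quadL2 (fun t => hgnn' t s) hroot
      constructor
      · rw [hB, ht₀, div_eq_mul_inv]; have hk := mul_inv_cancel₀ hc
        linear_combination (-2 * eval s A * (s 1 - s 0)) * hk
      · rw [hC, ht₀, div_eq_mul_inv]; have hk := mul_inv_cancel₀ hc
        linear_combination (eval s A * (s 1 - s 0)^2 * ((s 0 * s 1 + 1) * (s 0 * s 1 + 1)⁻¹ + 1)) * hk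
  have PE1 : Bg * (X 0 * X 1 + 1) = -(2 * A * (X 1 - X 0)) := by
    refine MvPolynomial.funext (fun s => ?_)
    have := (E12 s).1
    simp only [map_mul, map_add, map_neg, map_sub, map_one, map_ofNat, eval_X]
    push_cast
    linarith [this]
  have PE2 : Cg * (X 0 * X 1 + 1)^2 = A * (X 1 - X 0)^2 := by
    refine MvPolynomial.funext (fun s => ?_)
    have := (E12 s).2
    simp only [map_mul, map_add, map_pow, map_sub, map_one, eval_X]
    linarith [this]
  -- Layer 2: write A (and A') as quadratics in y.
  have hA_deg0 : degreeOf 0 A ≤ 2 := by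
    have := degreeOf_coeff_finSuccEquiv g 0 2
    rw [← hA_def] at this
    simpa using this.trans hg1
  have hA'_deg0 : degreeOf 0 A' ≤ 2 := by
    have := degreeOf_coeff_finSuccEquiv h 0 2
    rw [← hA'_def] at this
    simpa using this.trans hh1
  have hA_deg1 : degreeOf 1 A ≤ 2 := by
    have := degreeOf_coeff_finSuccEquiv g 1 2
    rw [← hA_def] at this
    simpa using this.trans hg2
  obtain ⟨a, ha_def⟩ : ∃ a : MvPolynomial (Fin 1) ℝ, a = (finSuccEquiv ℝ 1 A).coeff 2 := ⟨_, rfl⟩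
  obtain ⟨b, hb_def⟩ : ∃ b : MvPolynomial (Fin 1) ℝ, b = (finSuccEquiv ℝ 1 A).coeff 1 := ⟨_, rfl⟩
  obtain ⟨cA, hcA_def⟩ : ∃ cA : MvPolynomial (Fin 1) ℝ, cA = (finSuccEquiv ℝ 1 A).coeff 0 := ⟨_, rfl⟩
  obtain ⟨a', ha'_def⟩ : ∃ a' : MvPolynomial (Fin 1) ℝ, a' = (finSuccEquiv ℝ 1 A').coeff 2 := ⟨_, rfl⟩
  have hAq : ∀ (y : ℝ) (s : Fin 1 → ℝ),
      eval (Fin.cons y s : Fin 2 → ℝ) A =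
        eval s a * y^2 + eval s b * y + eval s cA := fun y s => by
    rw [ha_def, hb_def, hcA_def]; exact eval_decomp A hA_deg0 y s
  have hA'q : ∀ (y : ℝ) (s : Fin 1 → ℝ),
      eval (Fin.cons y s : Fin 2 → ℝ) A' =
        eval s a' * y^2 + eval s ((finSuccEquiv ℝ 1 A').coeff 1) * y +
          eval s ((finSuccEquiv ℝ 1 A').coeff 0) := fun y s => by
    rw [ha'_def]; exact eval_decomp A' hA'_deg0 y s
  have hAnn : ∀ (y : ℝ) (s : Fin 1 → ℝ),
      0 ≤ eval s a * y^2 + eval s b * y + eval s cA := fun y s =>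
    (hAq y s) ▸ hApos (Fin.cons y s)
  have hA'nn : ∀ (y : ℝ) (s : Fin 1 → ℝ),
      0 ≤ eval s a' * y^2 + eval s ((finSuccEquiv ℝ 1 A').coeff 1) * y +
        eval s ((finSuccEquiv ℝ 1 A').coeff 0) := fun y s =>
    (hA'q y s) ▸ hA'pos (Fin.cons y s)
  have hapos : ∀ s : Fin 1 → ℝ, 0 ≤ eval s a := fun s => quadL1 (fun y => hAnn y s)
  have ha'pos : ∀ s : Fin 1 → ℝ, 0 ≤ eval s a' := fun s => quadL1 (fun y => hA'nn y s)
  have ha_sum : ∀ s : Fin 1 → ℝ, eval s a + eval s a' = (s 0)^2 := by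
    intro s
    have key : ∀ y : ℝ,
        (eval s a + eval s a')*y^2 +
          (eval s b + eval s ((finSuccEquiv ℝ 1 A').coeff 1))*y +
          (eval s cA + eval s ((finSuccEquiv ℝ 1 A').coeff 0)) =
        (s 0)^2*y^2 + (2*(s 0))*y + 1 := by
      intro y
      have h1 := (hcoeffs (Fin.cons y s : Fin 2 → ℝ)).1
      rw [hAq y s, hA'q y s] at h1
      rw [show (Fin.cons y s : Fin 2 → ℝ) 0 = y from rfl,
          show (Fin.cons y s : Fin 2 → ℝ) 1 = s 0 from rfl] at h1
      nlinarith [h1]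
    exact (quadL4 key).1
  have hale : ∀ s : Fin 1 → ℝ, eval s a ≤ (s 0)^2 := fun s => by
    have := ha_sum s; linarith [ha'pos s]
  have Ea12 : ∀ s : Fin 1 → ℝ,
      eval s b * (s 0) = 2 * eval s a ∧ eval s cA * (s 0)^2 = eval s a := by
    intro s
    by_cases hc : s 0 = 0
    · have ha0 : eval s a = 0 := by
        have h1 := hale s; rw [hc] at h1
        have h2 := hapos s
        nlinarith
      rw [hc, ha0]; constructor <;> ring
    · obtain ⟨y₀, hy₀⟩ : ∃ y₀ : ℝ, y₀ = -1/(s 0) := ⟨_, rfl⟩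
      have hA0 : eval (Fin.cons y₀ s : Fin 2 → ℝ) A = 0 := by
        have h1 := hAle (Fin.cons y₀ s : Fin 2 → ℝ)
        have h2 := hApos (Fin.cons y₀ s : Fin 2 → ℝ)
        rw [show (Fin.cons y₀ s : Fin 2 → ℝ) 0 = y₀ from rfl,
            show (Fin.cons y₀ s : Fin 2 → ℝ) 1 = s 0 from rfl] at h1
        have h3 : y₀ * s 0 + 1 = 0 := by rw [hy₀]; field_simp; norm_num
        rw [h3] at h1
        nlinarith
      have hroot : eval s a * y₀^2 + eval s b * y₀ + eval s cA = 0 := by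
        rw [← hAq y₀ s]; exact hA0
      obtain ⟨hb', hc'⟩ := quadL2 (fun y => hAnn y s) hroot
      constructor
      · rw [hb', hy₀]; field_simp; try ring
      · rw [hc', hy₀]; field_simp; try ring
  have Pb : b * X 0 = 2 * a := by
    refine MvPolynomial.funext (fun s => ?_)
    have := (Ea12 s).1
    simp only [map_mul, map_ofNat, eval_X]
    push_cast
    linarith [this]
  have Pc : cA * X 0^2 = a := by
    refine MvPolynomial.funext (fun s => ?_)
    have := (Ea12 s).2
    simp only [map_mul, map_pow, eval_X]
    linarith [this]
  -- Layer 3: a is a single-variable polynomial squeezed between 0 and z².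
  have hA_deg1' : degreeOf 0 a ≤ 2 := by
    have := degreeOf_coeff_finSuccEquiv A 0 2
    rw [← ha_def] at this
    simpa using this.trans hA_deg1
  obtain ⟨u, hu_def⟩ : ∃ u : MvPolynomial (Fin 0) ℝ, u = (finSuccEquiv ℝ 0 a).coeff 2 := ⟨_, rfl⟩
  obtain ⟨v, hv_def⟩ : ∃ v : MvPolynomial (Fin 0) ℝ, v = (finSuccEquiv ℝ 0 a).coeff 1 := ⟨_, rfl⟩
  obtain ⟨w, hw_def⟩ : ∃ w : MvPolynomial (Fin 0) ℝ, w = (finSuccEquiv ℝ 0 a).coeff 0 := ⟨_, rfl⟩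
  obtain ⟨p2, hp2_def⟩ : ∃ p2 : ℝ, p2 = eval Fin.elim0 u := ⟨_, rfl⟩
  obtain ⟨p1, hp1_def⟩ : ∃ p1 : ℝ, p1 = eval Fin.elim0 v := ⟨_, rfl⟩
  obtain ⟨p0, hp0_def⟩ : ∃ p0 : ℝ, p0 = eval Fin.elim0 w := ⟨_, rfl⟩
  have hs1 : ∀ s : Fin 1 → ℝ, eval s a = p2*(s 0)^2 + p1*(s 0) + p0 := by
    intro s
    have htail : Fin.tail s = Fin.elim0 := funext (fun i => i.elim0)
    have := eval_decomp a hA_deg1' (s 0) (Fin.tail s)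
    rw [Fin.cons_self_tail, htail] at this
    rw [hp2_def, hp1_def, hp0_def, hu_def, hv_def, hw_def]
    exact this
  have h3nn : ∀ z : ℝ, 0 ≤ p2*z^2 + p1*z + p0 := by
    intro z
    have := hapos (fun _ => z)
    rwa [hs1 (fun _ => z)] at this
  have h3le : ∀ z : ℝ, p2*z^2 + p1*z + p0 ≤ z^2 := by
    intro z
    have := hale (fun _ => z)
    rwa [hs1 (fun _ => z)] at this
  have hp0 : p0 = 0 := by
    have h1 := h3nn 0; have h2 := h3le 0
    nlinarith
  have hp1 : p1 = 0 := by
    have hroot : p2*(0:ℝ)^2 + p1*0 + p0 = 0 := by rw [hp0]; ring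
    have := (quadL2 h3nn hroot).1
    simpa using this
  have hp2nn : 0 ≤ p2 := quadL1 h3nn
  have hs2 : ∀ s : Fin 1 → ℝ, eval s a = p2 * (s 0)^2 := by
    intro s; rw [hs1 s, hp0, hp1]; ring
  have Pa : a = C p2 * X 0^2 := by
    refine MvPolynomial.funext (fun s => ?_)
    rw [hs2 s]; simp
  -- back-substitute
  have Pb' : b = 2 * C p2 * X 0 := by
    refine mul_right_cancel₀ (X_ne_zero (0 : Fin 1)) ?_
    rw [Pb, Pa]; ring
  have Pc' : cA = C p2 := by
    refine mul_right_cancel₀ (pow_ne_zero 2 (X_ne_zero (0 : Fin 1))) ?_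
    rw [Pc, Pa]
  have hAfun : ∀ s : Fin 2 → ℝ, eval s A = p2 * ((s 0)*(s 1)+1)^2 := by
    intro s
    have hq := hAq (s 0) (Fin.tail s)
    rw [Fin.cons_self_tail] at hq
    rw [hq, hs2 (Fin.tail s)]
    have hb2 : eval (Fin.tail s) b = 2*p2*(s 1) := by
      rw [Pb']; simp [show Fin.tail s 0 = s 1 from rfl]; try ring
    have hc2 : eval (Fin.tail s) cA = p2 := by rw [Pc']; simp
    rw [hb2, hc2, show Fin.tail s 0 = s 1 from rfl]
    ring
  have PA : A = C p2 * (X 0 * X 1 + 1)^2 := by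
    refine MvPolynomial.funext (fun s => ?_)
    rw [hAfun s]; simp
  have hX01 : (X 0 * X 1 + 1 : MvPolynomial (Fin 2) ℝ) ≠ 0 := by
    intro hcon
    have := congrArg (eval (fun _ => (0:ℝ))) hcon
    simp at this
  have PB : Bg = C p2 * (-2 * (X 0 * X 1 + 1) * (X 1 - X 0)) := by
    refine mul_right_cancel₀ hX01 ?_
    rw [PE1, PA]; ring
  have PC : Cg = C p2 * (X 1 - X 0)^2 := by
    refine mul_right_cancel₀ (pow_ne_zero 2 hX01) ?_
    rw [PE2, PA]; ring
  -- conclude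
  refine ⟨p2, hp2nn, ?_⟩
  refine MvPolynomial.funext (fun vv => ?_)
  have hv := hgq (vv 0) (Fin.tail vv)
  rw [Fin.cons_self_tail] at hv
  rw [hv]
  have hAv := congrArg (eval (Fin.tail vv)) PA
  have hBv := congrArg (eval (Fin.tail vv)) PB
  have hCv := congrArg (eval (Fin.tail vv)) PC
  simp only [map_mul, map_add, map_pow, map_sub, map_one, map_neg, map_ofNat, eval_X, eval_C,
    show Fin.tail vv 0 = vv 1 from rfl, show Fin.tail vv 1 = vv 2 from rfl] at hAv hBv hCv
  rw [hAv, hBv, hCv, hP₁]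
  simp only [map_mul, map_add, map_pow, map_sub, eval_X, eval_C]
  ring
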